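/- arXiv:2008.09029 — 7 statements merged into one kernel-verified Lean document; each statement's English description precedes it below -/
import Mathlib

section
/- Let A be a meet semi-lattice which is locally finite, b ∈ A, and B = b̂ the principal lower set of b. Then ζ_A(V_B) = W_A(B): that is, if u = ζ_A(v) for some v ∈ ⊕_{a∈A}V and u satisfies u_a = u_c whenever â ∩ b̂ = ĉ ∩ b̂, then v is supported on b̂. -/
open Finset

/-- In a locally finite meet semi-lattice `A`, if `u = ζ_A(v)` belongs to
`W_A(b̂)` — i.e. `u_a = u_c` whenever `â ∩ b̂ = ĉ ∩ b̂` — then `v` is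
supported on the principal lower set `b̂`. -/
theorem stmt_7 {A k V : Type*} [SemilatticeInf A] [LocallyFiniteOrder A]
    [DecidableRel ((· ≤ ·) : A → A → Prop)]
    [Field k] [AddCommGroup V] [Module k V]
    (b : A) (v : A →₀ V)
    (hW : ∀ a c : A,
      {x : A | x ≤ a ∧ x ≤ b} = {x : A | x ≤ c ∧ x ≤ b} →
        ∑ x ∈ v.support.filter (· ≤ a), v x =
          ∑ x ∈ v.support.filter (· ≤ c), v x) :
    ∀ a : A, v a ≠ 0 → a ≤ b := by
  intro a ha
  by_contra hab
  classical
  set T := v.support.filter (fun x => ¬ x ≤ b) with hT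
  have hne : T.Nonempty := ⟨a, by simp [hT, Finsupp.mem_support_iff, ha, hab]⟩
  obtain ⟨m, hm, hmin⟩ := T.exists_minimal hne
  have hm' := Finset.mem_filter.mp hm
  have key := hW m (m ⊓ b) (by
    ext x
    simp only [Set.mem_setOf_eq, le_inf_iff]
    constructor
    · rintro ⟨h1, h2⟩; exact ⟨⟨h1, h2⟩, h2⟩
    · rintro ⟨⟨h1, _⟩, h2⟩; exact ⟨h1, h2⟩)
  have h1 : v.support.filter (· ≤ m ⊓ b) =
      (v.support.filter (· ≤ m)).filter (fun x => x ≤ b) := by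
    ext x; simp [le_inf_iff, and_assoc]
  rw [h1] at key
  have h2 := Finset.sum_filter_add_sum_filter_not (v.support.filter (· ≤ m))
    (fun x => x ≤ b) (fun x => v x)
  rw [key] at h2
  have h3 : ∑ x ∈ (v.support.filter (· ≤ m)).filter (fun x => ¬ x ≤ b), v x = 0 := by
    have := h2
    nth_rewrite 2 [← add_zero (∑ x ∈ (v.support.filter (· ≤ m)).filter
      (fun x => x ≤ b), v x)] at this
    exact add_left_cancel this
  have h4 : (v.support.filter (· ≤ m)).filter (fun x => ¬ x ≤ b) = {m} := by
    ext x
    simp only [Finset.mem_filter, Finset.mem_singleton]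
    constructor
    · rintro ⟨⟨hxs, hxm⟩, hxb⟩
      have hxT : x ∈ T := Finset.mem_filter.mpr ⟨hxs, hxb⟩
      by_contra hne'
      exact hne' (le_antisymm hxm (hmin hxT hxm))
    · rintro rfl
      exact ⟨⟨hm'.1, le_refl _⟩, hm'.2⟩
  rw [h4, Finset.sum_singleton] at h3
  exact Finsupp.mem_support_iff.mp hm'.1 h3
end

section
/- Let A be a finite meet semi-lattice, V a vector space, and (π_a)_{a∈A} a collection of linear endomorphisms of V satisfying π_a π_b = π_{a∧b} for all a,b. Define s_a = Σ_{b≤a} μ_A(a,b) π_b (the Möbius inversion, so π_a = Σ_{b≤a} s_b). Then for all a,b ∈ A: s_b ∘ π_a = [b ≤ a]·s_b. -/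
open Finset

/-- Let `A` be a finite meet semi-lattice and `(π_a)` endomorphisms of `V`
with `π_a π_b = π_{a ⊓ b}`.  With `s_a = ∑_{b ≤ a} μ_A(a,b) • π_b` (Möbius
inversion of `π`), one has `s_b ∘ π_a = [b ≤ a] • s_b`. -/
theorem stmt_8 {A k V : Type*} [SemilatticeInf A] [Fintype A] [DecidableEq A]
    [DecidableRel ((· ≤ ·) : A → A → Prop)]
    [Field k] [AddCommGroup V] [Module k V]
    (π : A → Module.End k V)
    (hI : ∀ a b : A, π a * π b = π (a ⊓ b))
    (μZ : A → A → ℤ)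
    (hμ : ∀ a b : A, b ≤ a →
      (∑ c ∈ Finset.univ.filter (fun c => b ≤ c ∧ c ≤ a), μZ a c) =
        if b = a then 1 else 0)
    (s : A → Module.End k V)
    (hs : ∀ a : A, s a = ∑ b ∈ Finset.univ.filter (· ≤ a), μZ a b • π b) :
    ∀ a b : A, s b * π a = if b ≤ a then s b else 0 := by
  classical
  -- hμ for all pairs (no order assumption)
  have hμfull : ∀ a b : A,
      (∑ c ∈ Finset.univ.filter (fun c => b ≤ c ∧ c ≤ a), μZ a c) =
        if b = a then 1 else 0 := by
    intro a b
    by_cases hba : b ≤ a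
    · exact hμ a b hba
    · have h1 : Finset.univ.filter (fun c => b ≤ c ∧ c ≤ a) = ∅ := by
        ext c
        simp only [mem_filter, mem_univ, true_and, Finset.notMem_empty, iff_false]
        rintro ⟨u, v⟩; exact hba (u.trans v)
      have h2 : b ≠ a := fun h => hba (h ▸ le_refl b)
      rw [h1, Finset.sum_empty, if_neg h2]
  -- Matrix formulation, to flip the Möbius identity.
  set M : Matrix A A ℤ := Matrix.of (fun a c => if c ≤ a then μZ a c else 0) with hM
  set Z : Matrix A A ℤ := Matrix.of (fun c b => if b ≤ c then 1 else 0) with hZ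
  have hMZ : M * Z = 1 := by
    ext a b
    rw [Matrix.mul_apply]
    have h1 : ∀ c : A, M a c * Z c b = if b ≤ c ∧ c ≤ a then μZ a c else 0 := by
      intro c
      simp only [hM, hZ, Matrix.of_apply]
      split_ifs <;> simp_all
    rw [Finset.sum_congr rfl (fun c _ => h1 c), ← Finset.sum_filter, hμfull a b,
      Matrix.one_apply]
    simp [eq_comm]
  have hZM : Z * M = 1 := mul_eq_one_comm.mp hMZ
  have hμ' : ∀ a b : A,
      (∑ c ∈ Finset.univ.filter (fun c => b ≤ c ∧ c ≤ a), μZ c b) =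
        if a = b then 1 else 0 := by
    intro a b
    have h0 := congrFun (congrFun hZM a) b
    rw [Matrix.mul_apply, Matrix.one_apply] at h0
    rw [← h0, Finset.sum_filter]
    refine Finset.sum_congr rfl fun c _ => ?_
    simp only [hM, hZ, Matrix.of_apply]
    split_ifs <;> simp_all
  -- Möbius inversion: π a = ∑_{e ≤ a} s e
  have hπ : ∀ a : A, π a = ∑ e ∈ Finset.univ.filter (· ≤ a), s e := by
    intro a
    have key : ∑ e ∈ Finset.univ.filter (· ≤ a), s e
        = ∑ c : A, (∑ e ∈ Finset.univ.filter (fun e => c ≤ e ∧ e ≤ a), μZ e c) • π c := by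
      calc ∑ e ∈ Finset.univ.filter (· ≤ a), s e
          = ∑ e : A, ∑ c : A, if c ≤ e ∧ e ≤ a then μZ e c • π c else 0 := by
            rw [Finset.sum_filter]
            refine Finset.sum_congr rfl fun e _ => ?_
            by_cases h1 : e ≤ a
            · rw [if_pos h1, hs e, Finset.sum_filter]
              exact Finset.sum_congr rfl fun c _ => by simp [h1]
            · rw [if_neg h1]
              simp [h1]
        _ = ∑ c : A, ∑ e : A, if c ≤ e ∧ e ≤ a then μZ e c • π c else 0 :=
            Finset.sum_comm
        _ = ∑ c : A, (∑ e ∈ Finset.univ.filter (fun e => c ≤ e ∧ e ≤ a), μZ e c) • π c := by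
            refine Finset.sum_congr rfl fun c _ => ?_
            rw [Finset.sum_filter, Finset.sum_smul]
            refine Finset.sum_congr rfl fun e _ => ?_
            split_ifs <;> simp
    rw [key]
    symm
    calc ∑ c : A, (∑ e ∈ Finset.univ.filter (fun e => c ≤ e ∧ e ≤ a), μZ e c) • π c
        = ∑ c : A, (if a = c then (1:ℤ) else 0) • π c :=
          Finset.sum_congr rfl fun c _ => by rw [hμ' a c]
      _ = π a := by simp
  -- Main computation
  intro a b
  have key : s b * π a
      = ∑ e : A, ((if e ≤ a then
          (∑ c ∈ Finset.univ.filter (fun c => e ≤ c ∧ c ≤ b), μZ b c) else 0) • s e) := by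
    calc s b * π a = ∑ c ∈ Finset.univ.filter (· ≤ b), μZ b c • π (c ⊓ a) := by
          rw [hs b, Finset.sum_mul]
          exact Finset.sum_congr rfl fun c _ => by rw [smul_mul_assoc, hI]
      _ = ∑ c : A, ∑ e : A, if c ≤ b ∧ e ≤ c ∧ e ≤ a then μZ b c • s e else 0 := by
          rw [Finset.sum_filter]
          refine Finset.sum_congr rfl fun c _ => ?_
          by_cases h1 : c ≤ b
          · rw [if_pos h1, hπ (c ⊓ a), Finset.smul_sum, Finset.sum_filter]
            refine Finset.sum_congr rfl fun e _ => ?_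
            by_cases h2 : e ≤ c ⊓ a
            · rw [if_pos h2, if_pos ⟨h1, le_inf_iff.mp h2⟩]
            · have h3 : ¬(c ≤ b ∧ e ≤ c ∧ e ≤ a) := by
                rw [le_inf_iff] at h2; tauto
              rw [if_neg h2, if_neg h3]
          · simp [h1]
      _ = ∑ e : A, ∑ c : A, if c ≤ b ∧ e ≤ c ∧ e ≤ a then μZ b c • s e else 0 :=
          Finset.sum_comm
      _ = ∑ e : A, ((if e ≤ a then
            (∑ c ∈ Finset.univ.filter (fun c => e ≤ c ∧ c ≤ b), μZ b c) else 0) • s e) := by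
          refine Finset.sum_congr rfl fun e _ => ?_
          by_cases he : e ≤ a
          · rw [if_pos he, Finset.sum_filter, Finset.sum_smul]
            refine Finset.sum_congr rfl fun c _ => ?_
            by_cases h1 : e ≤ c ∧ c ≤ b
            · rw [if_pos h1, if_pos ⟨h1.2, h1.1, he⟩]
            · rw [if_neg h1, zero_smul, if_neg (by tauto)]
          · rw [if_neg he, zero_smul]
            refine Finset.sum_eq_zero fun c _ => ?_
            rw [if_neg]
            tauto
  rw [key]
  have hcoef : ∀ e : A,
      (∑ c ∈ Finset.univ.filter (fun c => e ≤ c ∧ c ≤ b), μZ b c) =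
        if e = b then 1 else 0 := fun e => hμfull b e
  calc ∑ e : A, ((if e ≤ a then
          (∑ c ∈ Finset.univ.filter (fun c => e ≤ c ∧ c ≤ b), μZ b c) else 0) • s e)
      = ∑ e : A, (if e = b then (if b ≤ a then (1:ℤ) else 0) • s b else 0) := by
        refine Finset.sum_congr rfl fun e _ => ?_
        rw [hcoef e]
        by_cases heb : e = b
        · subst heb
          by_cases hea : e ≤ a <;> simp [hea]
        · by_cases hea : e ≤ a <;> simp [hea, heb]
    _ = (if b ≤ a then (1:ℤ) else 0) • s b := by
        rw [Finset.sum_ite_eq' Finset.univ b]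
        simp
    _ = if b ≤ a then s b else 0 := by
        split_ifs <;> simp
end

section
/- Let A be a finite meet semi-lattice, V a vector space, and (π_a)_{a∈A} endomorphisms of V satisfying the intersection property π_a π_b = π_{a∧b} for all a,b ∈ A. Define s_a = Σ_{b≤a} μ_A(a,b) π_b. Then s_a ∘ s_b = δ_{a,b} · s_a for all a,b ∈ A, i.e., the s_a are pairwise orthogonal idempotents. -/
open Finset

/-- Let `A` be a finite meet semi-lattice and `(π_a)` endomorphisms of `V`
satisfying the intersection property `π_a π_b = π_{a ⊓ b}`.  Then the Möbius
inverses `s_a = ∑_{b ≤ a} μ_A(a,b) • π_b` are pairwise orthogonal idempotents: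
`s_a ∘ s_b = δ_{a,b} • s_a`. -/
theorem stmt_9 {A k V : Type*} [SemilatticeInf A] [Fintype A] [DecidableEq A]
    [DecidableRel ((· ≤ ·) : A → A → Prop)]
    [Field k] [AddCommGroup V] [Module k V]
    (π : A → Module.End k V)
    (hI : ∀ a b : A, π a * π b = π (a ⊓ b))
    (μZ : A → A → ℤ)
    (hμ : ∀ a b : A, b ≤ a →
      (∑ c ∈ Finset.univ.filter (fun c => b ≤ c ∧ c ≤ a), μZ a c) =
        if b = a then 1 else 0)
    (s : A → Module.End k V)
    (hs : ∀ a : A, s a = ∑ b ∈ Finset.univ.filter (· ≤ a), μZ a b • π b) :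
    ∀ a b : A, s a * s b = if a = b then s a else 0 := by
  classical
  -- full (unconditional) version of hμ
  have hμfull : ∀ a b : A,
      (∑ c ∈ Finset.univ.filter (fun c => b ≤ c ∧ c ≤ a), μZ a c) =
        if b = a then 1 else 0 := by
    intro a b
    by_cases hba : b ≤ a
    · exact hμ a b hba
    · have h1 : Finset.univ.filter (fun c => b ≤ c ∧ c ≤ a) = ∅ :=
        Finset.filter_eq_empty_iff.mpr (fun c _ h => hba (h.1.trans h.2))
      have h2 : b ≠ a := fun h => hba (le_of_eq h)
      simp [h1, h2]
  -- dual Möbius identity via matrices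
  have hμ' : ∀ a d : A,
      (∑ c ∈ Finset.univ.filter (fun c => a ≤ c ∧ c ≤ d), μZ c a) =
        if d = a then 1 else 0 := by
    set M : Matrix A A ℤ := Matrix.of (fun a c => if c ≤ a then μZ a c else 0) with hM
    set Z : Matrix A A ℤ := Matrix.of (fun c b => if b ≤ c then (1 : ℤ) else 0) with hZ
    have hMZ : M * Z = 1 := by
      ext a b
      rw [Matrix.mul_apply, Matrix.one_apply]
      have he : ∀ c : A, M a c * Z c b = if b ≤ c ∧ c ≤ a then μZ a c else 0 := by
        intro c
        simp only [hM, hZ, Matrix.of_apply]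
        by_cases h1 : c ≤ a <;> by_cases h2 : b ≤ c <;> simp [h1, h2]
      rw [Finset.sum_congr rfl fun c _ => he c, ← Finset.sum_filter, hμfull a b]
      by_cases h : a = b
      · simp [h]
      · rw [if_neg (fun h' : b = a => h h'.symm), if_neg h]
    have hZM : Z * M = 1 := mul_eq_one_comm.mp hMZ
    intro a d
    have := congrFun (congrFun hZM d) a
    rw [Matrix.mul_apply, Matrix.one_apply] at this
    have he : ∀ c : A, Z d c * M c a = if a ≤ c ∧ c ≤ d then μZ c a else 0 := by
      intro c
      simp only [hM, hZ, Matrix.of_apply]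
      by_cases h1 : c ≤ d <;> by_cases h2 : a ≤ c <;> simp [h1, h2]
    rw [Finset.sum_congr rfl fun c _ => he c, ← Finset.sum_filter] at this
    exact this
  -- Möbius inversion: π a = ∑_{c ≤ a} s c
  have inv : ∀ a : A, (∑ c ∈ Finset.univ.filter (· ≤ a), s c) = π a := by
    intro a
    calc (∑ c ∈ Finset.univ.filter (· ≤ a), s c)
        = ∑ c, ∑ d, if d ≤ c ∧ c ≤ a then μZ c d • π d else 0 := by
          rw [Finset.sum_filter]
          refine Finset.sum_congr rfl fun c _ => ?_
          by_cases h : c ≤ a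
          · simp only [h, if_true, and_true, hs c, Finset.sum_filter]
          · simp [h]
      _ = ∑ d, ∑ c, if d ≤ c ∧ c ≤ a then μZ c d • π d else 0 := Finset.sum_comm
      _ = ∑ d, (∑ c ∈ Finset.univ.filter (fun c => d ≤ c ∧ c ≤ a), μZ c d) • π d := by
          refine Finset.sum_congr rfl fun d _ => ?_
          rw [Finset.sum_filter, Finset.sum_smul]
          exact Finset.sum_congr rfl fun c _ => by split <;> simp
      _ = π a := by
          simp only [fun d => hμ' d a, ite_smul, one_smul, zero_smul]
          simp
  -- key lemma: π a * s b = if b ≤ a then s b else 0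
  have L : ∀ b a : A, π a * s b = if b ≤ a then s b else 0 := by
    intro b
    induction b using WellFoundedLT.induction with
    | ind b ih =>
      intro a
      have key : π (a ⊓ b) = π a * s b +
          ∑ c ∈ (Finset.univ.filter (· ≤ b)).erase b, π a * s c := by
        rw [← hI, ← inv b, Finset.mul_sum]
        exact (Finset.add_sum_erase _ (fun c => π a * s c) (by simp)).symm
      have h1 : ∀ c ∈ (Finset.univ.filter (· ≤ b)).erase b,
          π a * s c = if c ≤ a then s c else 0 := by
        intro c hc
        have hcb : c ≤ b := (Finset.mem_filter.mp (Finset.mem_erase.mp hc).2).2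
        have hcb' : c < b := lt_of_le_of_ne hcb (Finset.mem_erase.mp hc).1
        exact ih c hcb' a
      have hsum : ∑ c ∈ (Finset.univ.filter (· ≤ b)).erase b, π a * s c =
          ∑ c ∈ (Finset.univ.filter (· ≤ a ⊓ b)).erase b, s c := by
        rw [Finset.sum_congr rfl h1, ← Finset.sum_filter]
        congr 1
        ext c
        simp only [Finset.mem_filter, Finset.mem_erase, Finset.mem_univ, true_and,
          le_inf_iff, and_true]
        tauto
      rw [hsum, ← inv (a ⊓ b)] at key
      by_cases hba : b ≤ a
      · have hmem : b ∈ Finset.univ.filter (· ≤ a ⊓ b) := by simp [hba]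
        rw [← Finset.add_sum_erase _ s hmem] at key
        simp only [hba, if_true]
        exact (add_right_cancel key).symm
      · have hnm : b ∉ Finset.univ.filter (· ≤ a ⊓ b) := by
          simp only [Finset.mem_filter, Finset.mem_univ, true_and, le_inf_iff]
          exact fun h => hba h.1
        rw [Finset.erase_eq_of_notMem hnm] at key
        simp only [hba, if_false]
        exact add_right_cancel (key.symm.trans (zero_add _).symm)
  -- main computation
  intro a b
  have hms : ∀ c : A, (μZ a c • π c) * s b = μZ a c • (π c * s b) := fun c => smul_mul_assoc _ _ _
  calc s a * s b
      = ∑ c ∈ Finset.univ.filter (· ≤ a), (μZ a c • π c) * s b := by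
        rw [hs a, Finset.sum_mul]
    _ = ∑ c, if b ≤ c ∧ c ≤ a then μZ a c • s b else 0 := by
        rw [Finset.sum_filter]
        refine Finset.sum_congr rfl fun c _ => ?_
        rw [hms c, L b c]
        by_cases h1 : c ≤ a <;> by_cases h2 : b ≤ c <;> simp [h1, h2]
    _ = (∑ c ∈ Finset.univ.filter (fun c => b ≤ c ∧ c ≤ a), μZ a c) • s b := by
        rw [Finset.sum_filter, Finset.sum_smul]
        exact Finset.sum_congr rfl fun c _ => by split <;> simp
    _ = if a = b then s a else 0 := by
        rw [hμfull a b]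
        by_cases h : b = a
        · subst h; simp
        · simp [h, Ne.symm h]
end

section
/- Let A be a finite poset and (π_a)_{a∈A} a collection of projectors of a vector space V such that for all a,b ∈ A, π_a π_b = Σ_{c ≤ a, c ≤ b} s_c, where s_c = Σ_{d≤c} μ_A(c,d) π_d. Then s_a s_b = δ_{a,b} s_a for all a,b ∈ A. -/
open Finset

/-- Let `A` be a finite poset and `(π_a)` projectors of `V` satisfying the
generalized intersection property `π_a π_b = ∑_{c ≤ a, c ≤ b} s_c`, where
`s_c = ∑_{d ≤ c} μ_A(c,d) • π_d`.  Then `s_a s_b = δ_{a,b} • s_a`. -/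
theorem stmt_10 {A k V : Type*} [PartialOrder A] [Fintype A] [DecidableEq A]
    [DecidableRel ((· ≤ ·) : A → A → Prop)]
    [Field k] [AddCommGroup V] [Module k V]
    (π : A → Module.End k V)
    (hidem : ∀ a : A, π a * π a = π a)
    (μZ : A → A → ℤ)
    (hμ : ∀ a b : A, b ≤ a →
      (∑ c ∈ Finset.univ.filter (fun c => b ≤ c ∧ c ≤ a), μZ a c) =
        if b = a then 1 else 0)
    (s : A → Module.End k V)
    (hs : ∀ c : A, s c = ∑ d ∈ Finset.univ.filter (· ≤ c), μZ c d • π d)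
    (hI : ∀ a b : A,
      π a * π b = ∑ c ∈ Finset.univ.filter (fun c => c ≤ a ∧ c ≤ b), s c) :
    ∀ a b : A, s a * s b = if a = b then s a else 0 := by
  -- Key lemma: π a * s b = if b ≤ a then s b else 0
  have hπs : ∀ a b : A, π a * s b = if b ≤ a then s b else 0 := by
    intro a b
    calc π a * s b
        = ∑ e ∈ univ.filter (· ≤ b), μZ b e • (π a * π e) := by
          rw [hs b, Finset.mul_sum]
          exact Finset.sum_congr rfl fun e _ => (mul_smul_comm _ _ _)
      _ = ∑ e ∈ univ, ∑ c ∈ univ,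
            if (e ≤ b) ∧ (c ≤ a ∧ c ≤ e) then μZ b e • s c else 0 := by
          rw [Finset.sum_filter]
          refine Finset.sum_congr rfl fun e _ => ?_
          by_cases he : e ≤ b
          · simp only [he, true_and, if_true, hI a e, Finset.smul_sum,
              Finset.sum_filter, smul_ite, smul_zero]
          · simp [he]
      _ = ∑ c ∈ univ, ∑ e ∈ univ,
            if (e ≤ b) ∧ (c ≤ a ∧ c ≤ e) then μZ b e • s c else 0 :=
          Finset.sum_comm
      _ = ∑ c ∈ univ, if c ≤ a then
            (∑ e ∈ univ.filter (fun e => c ≤ e ∧ e ≤ b), μZ b e) • s c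
          else 0 := by
          refine Finset.sum_congr rfl fun c _ => ?_
          by_cases hc : c ≤ a
          · simp only [hc, if_true, Finset.sum_smul, Finset.sum_filter]
            refine Finset.sum_congr rfl fun e _ => ?_
            by_cases h1 : c ≤ e <;> by_cases h2 : e ≤ b <;> simp [h1, h2, hc]
          · simp [hc]
      _ = ∑ c ∈ univ, if c ≤ a then (if c = b then s c else 0) else 0 := by
          refine Finset.sum_congr rfl fun c _ => ?_
          by_cases hc : c ≤ a
          · simp only [hc, if_true]
            by_cases hcb : c ≤ b
            · rw [hμ b c hcb]
              by_cases hce : c = b <;> simp [hce]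
            · have : univ.filter (fun e => c ≤ e ∧ e ≤ b) = ∅ := by
                ext e
                simp only [Finset.mem_filter, Finset.mem_univ, true_and,
                  Finset.notMem_empty, iff_false]
                rintro ⟨h1, h2⟩; exact hcb (h1.trans h2)
              have hcb' : c ≠ b := fun h => hcb (h ▸ le_refl c)
              simp [this, hcb']
          · simp [hc]
      _ = if b ≤ a then s b else 0 := by
          have h : ∀ c : A, (if c ≤ a then (if c = b then s c else 0) else 0)
              = if c = b then (if b ≤ a then s b else 0) else 0 := by
            intro c
            by_cases hc : c = b
            · subst hc; by_cases hca : c ≤ a <;> simp [hca]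
            · simp [hc]
          rw [Finset.sum_congr rfl fun c _ => h c, Finset.sum_ite_eq' univ b]
          simp
  intro a b
  calc s a * s b
      = ∑ d ∈ univ.filter (· ≤ a), μZ a d • (π d * s b) := by
        rw [hs a, Finset.sum_mul]
        exact Finset.sum_congr rfl fun d _ => (smul_mul_assoc _ _ _)
    _ = ∑ d ∈ univ, if b ≤ d ∧ d ≤ a then μZ a d • s b else 0 := by
        rw [Finset.sum_filter]
        refine Finset.sum_congr rfl fun d _ => ?_
        rw [hπs d b]
        by_cases h1 : b ≤ d <;> by_cases h2 : d ≤ a <;> simp [h1, h2]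
    _ = (∑ d ∈ univ.filter (fun d => b ≤ d ∧ d ≤ a), μZ a d) • s b := by
        rw [Finset.sum_smul, Finset.sum_filter]
    _ = if a = b then s a else 0 := by
        by_cases hba : b ≤ a
        · rw [hμ a b hba]
          by_cases h : b = a
          · simp [h]
          · simp [h, Ne.symm h]
        · have : univ.filter (fun d => b ≤ d ∧ d ≤ a) = ∅ := by
            ext d
            simp only [Finset.mem_filter, Finset.mem_univ, true_and,
              Finset.notMem_empty, iff_false]
            rintro ⟨h1, h2⟩; exact hba (h1.trans h2)
          have : (∑ d ∈ univ.filter (fun d => b ≤ d ∧ d ≤ a), μZ a d) = 0 := by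
            rw [this]; simp
          rw [this]
          have hab : a ≠ b := fun h => hba (h ▸ le_refl a)
          simp [hab]
end

section
/- Let A be a finite poset, V a vector space, and (π_a)_{a∈A} a collection of projectors of V satisfying the intersection property. Set s_a = Σ_{b≤a} μ_A(a,b) π_b and S_a = im s_a. Then for every a ∈ A the map ⊕_{b ≤ a} S_b → im π_a sending (w_b) to Σ_{b≤a} w_b is an isomorphism of vector spaces. -/
open Finset

/-- Let `A` be a finite poset and `(π_a)` projectors of `V` satisfying the
intersection property.  With `s_a` the Möbius inverses and `S_a = im s_a`,
for every `a` the natural map `⊕_{b ≤ a} S_b → V`, `(w_b) ↦ ∑ w_b`, is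
injective with image `im π_a`; i.e. it is an isomorphism onto `im π_a`. -/
theorem stmt_11 {A k V : Type*} [PartialOrder A] [Fintype A] [DecidableEq A]
    [DecidableRel ((· ≤ ·) : A → A → Prop)]
    [Field k] [AddCommGroup V] [Module k V]
    (π : A → Module.End k V)
    (hidem : ∀ a : A, π a * π a = π a)
    (μZ : A → A → ℤ)
    (hμ : ∀ a b : A, b ≤ a →
      (∑ c ∈ Finset.univ.filter (fun c => b ≤ c ∧ c ≤ a), μZ a c) =
        if b = a then 1 else 0)
    (s : A → Module.End k V)
    (hs : ∀ c : A, s c = ∑ d ∈ Finset.univ.filter (· ≤ c), μZ c d • π d)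
    (hI : ∀ a b : A,
      π a * π b = ∑ c ∈ Finset.univ.filter (fun c => c ≤ a ∧ c ≤ b), s c) :
    ∀ a : A,
      Function.Injective
        (DirectSum.coeLinearMap
          (fun b : {b : A // b ≤ a} => LinearMap.range (s b.1))) ∧
      LinearMap.range
          (DirectSum.coeLinearMap
            (fun b : {b : A // b ≤ a} => LinearMap.range (s b.1))) =
        LinearMap.range (π a) := by
  -- μ sums without the b ≤ a hypothesis
  have hμ' : ∀ a b : A,
      (∑ c ∈ Finset.univ.filter (fun c => b ≤ c ∧ c ≤ a), μZ a c) =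
        if b = a then 1 else 0 := by
    intro a b
    by_cases h : b ≤ a
    · exact hμ a b h
    · rw [Finset.filter_false_of_mem, Finset.sum_empty, if_neg]
      · rintro rfl; exact h le_rfl
      · intro c _ hc; exact h (hc.1.trans hc.2)
  -- π a ∘ s c = s c if c ≤ a, otherwise 0
  have hπs : ∀ a c : A, π a * s c = if c ≤ a then s c else 0 := by
    intro a c
    have step1 : π a * s c =
        ∑ d ∈ univ, ∑ e ∈ univ,
          if d ≤ c ∧ e ≤ a ∧ e ≤ d then μZ c d • s e else 0 := by
      rw [hs c, Finset.mul_sum, Finset.sum_filter]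
      refine Finset.sum_congr rfl fun d _ => ?_
      by_cases hd : d ≤ c
      · simp only [hd, if_true, true_and, mul_smul_comm, hI, Finset.smul_sum,
          Finset.sum_filter, smul_ite, smul_zero]
      · simp [hd]
    rw [step1, Finset.sum_comm]
    have step2 : ∀ e : A,
        (∑ d ∈ univ, if d ≤ c ∧ e ≤ a ∧ e ≤ d then μZ c d • s e else 0)
          = if e ≤ a then (if e = c then (1:ℤ) else 0) • s e else 0 := by
      intro e
      by_cases he : e ≤ a
      · rw [if_pos he, ← hμ' c e, Finset.sum_filter, Finset.sum_smul]
        refine Finset.sum_congr rfl fun d _ => ?_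
        by_cases h1 : e ≤ d <;> by_cases h2 : d ≤ c <;> simp [h1, h2, he]
      · rw [if_neg he]
        apply Finset.sum_eq_zero
        intro d _
        rw [if_neg (by tauto)]
    simp only [step2]
    by_cases hca : c ≤ a
    · rw [if_pos hca, Finset.sum_eq_single_of_mem c (Finset.mem_univ c)]
      · simp [hca]
      · intro e _ hne; simp [hne]
    · rw [if_neg hca]
      apply Finset.sum_eq_zero
      intro e _
      by_cases he : e ≤ a
      · have hne : e ≠ c := fun h => hca (h ▸ he)
        simp [he, hne]
      · simp [he]
  -- orthogonal idempotents
  have hss : ∀ b c : A, s b * s c = if c = b then s c else 0 := by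
    intro b c
    rw [hs b, Finset.sum_mul]
    have : ∀ d ∈ Finset.univ.filter (· ≤ b),
        (μZ b d • π d) * s c = μZ b d • (if c ≤ d then s c else 0) := by
      intro d _; rw [smul_mul_assoc, hπs]
    rw [Finset.sum_congr rfl this, Finset.sum_filter]
    calc (∑ d ∈ univ, if d ≤ b then μZ b d • (if c ≤ d then s c else 0) else 0)
        = ∑ d ∈ univ, (if c ≤ d ∧ d ≤ b then μZ b d else 0) • s c := by
          refine Finset.sum_congr rfl fun d _ => ?_
          by_cases h1 : c ≤ d <;> by_cases h2 : d ≤ b <;> simp [h1, h2]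
      _ = (∑ d ∈ Finset.univ.filter (fun d => c ≤ d ∧ d ≤ b), μZ b d) • s c := by
          rw [Finset.sum_filter, Finset.sum_smul]
      _ = if c = b then s c else 0 := by
          rw [hμ' b c]; by_cases h : c = b <;> simp [h]
  -- π a = ∑_{c ≤ a} s c
  have hπa : ∀ a : A, π a = ∑ c ∈ Finset.univ.filter (· ≤ a), s c := by
    intro a
    have h := hI a a
    rw [hidem] at h
    rw [h]
    apply Finset.sum_congr _ fun _ _ => rfl
    ext c; simp
  intro a
  set p := fun b : {b : A // b ≤ a} => LinearMap.range (s b.1) with hp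
  -- key: s b kills elements of range (s c) for c ≠ b, fixes those of range (s b)
  have hkill : ∀ (b c : A), c ≠ b → ∀ v ∈ LinearMap.range (s c), s b v = 0 := by
    rintro b c hne v ⟨w, rfl⟩
    have := congrArg (· w) (hss b c)
    simpa [hne, Module.End.mul_apply] using this
  have hfix : ∀ (b : A), ∀ v ∈ LinearMap.range (s b), s b v = v := by
    rintro b v ⟨w, rfl⟩
    have := congrArg (· w) (hss b b)
    simpa [Module.End.mul_apply] using this
  have hcoe : ∀ x : DirectSum {b : A // b ≤ a} (fun b => p b),
      DirectSum.coeLinearMap p x = ∑ b : {b : A // b ≤ a}, (x b : V) := by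
    intro x
    conv_lhs => rw [← DirectSum.sum_univ_of x]
    rw [map_sum]
    exact Finset.sum_congr rfl fun b _ => DirectSum.coeLinearMap_of p b (x b)
  constructor
  · rw [← LinearMap.ker_eq_bot]
    rw [eq_bot_iff]
    intro x hx
    have hx0 : DirectSum.coeLinearMap p x = 0 := hx
    rw [hcoe x] at hx0
    rw [Submodule.mem_bot]
    refine DFinsupp.ext fun b => Subtype.ext ?_
    have : s b.1 (∑ c : {b : A // b ≤ a}, (x c : V)) = (x b : V) := by
      rw [map_sum, Finset.sum_eq_single_of_mem b (Finset.mem_univ b)]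
      · exact hfix b.1 _ (x b).2
      · intro c _ hne
        exact hkill b.1 c.1 (fun h => hne (Subtype.ext h)) _ (x c).2
    rw [hx0, map_zero] at this
    simpa using this.symm
  · rw [DirectSum.range_coeLinearMap]
    apply le_antisymm
    · apply iSup_le
      intro b
      rintro v ⟨w, rfl⟩
      refine ⟨s b.1 w, ?_⟩
      have := congrArg (· w) (hπs a b.1)
      simpa [b.2, Module.End.mul_apply] using this
    · rintro v ⟨w, rfl⟩
      rw [hπa a]
      have : (∑ c ∈ Finset.univ.filter (· ≤ a), s c) w
          = ∑ c ∈ Finset.univ.filter (· ≤ a), s c w := by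
        simp [LinearMap.sum_apply]
      rw [this]
      apply Submodule.sum_mem
      intro c hc
      have hca : c ≤ a := by simpa using hc
      exact le_iSup p ⟨c, hca⟩ ⟨w, rfl⟩
end

section
/- Let A be a finite poset, V a vector space, and (π_a)_{a∈A} a collection of projectors of V. Then (π_a) satisfies the intersection property (for all a,b: π_a π_b = Σ_{c≤a,c≤b} s_c with s the Möbius inverse of π) if and only if (π_a) is decomposable, i.e., there exist subspaces (S_a)_{a∈A⁺} (A⁺ = A with a top element 1 adjoined) with V = ⊕_{a∈A⁺} S_a and π_a(Σ_b w_b) = Σ_{b≤a} w_b for all a ∈ A and all w_b ∈ S_b. -/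
open Finset

section AuxStmt12

variable {A k V : Type*} [PartialOrder A] [Fintype A] [DecidableEq A]
    [DecidableRel ((· ≤ ·) : A → A → Prop)]
    [Field k] [AddCommGroup V] [Module k V]

/-- The (lower-triangular) Möbius matrix. -/
private def stmt12M (μZ : A → A → ℤ) : Matrix A A ℤ :=
  fun x y => if y ≤ x then μZ x y else 0

/-- The zeta matrix. -/
private def stmt12Z : Matrix A A ℤ :=
  fun x y => if y ≤ x then 1 else 0

private lemma stmt12_MZ (μZ : A → A → ℤ)
    (hμ : ∀ a b : A, b ≤ a →
      (∑ c ∈ Finset.univ.filter (fun c => b ≤ c ∧ c ≤ a), μZ a c) =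
        if b = a then 1 else 0) :
    stmt12M μZ * stmt12Z = 1 := by
  ext a b
  rw [Matrix.mul_apply, Matrix.one_apply]
  have h1 : ∀ c : A, stmt12M μZ a c * stmt12Z c b =
      if b ≤ c ∧ c ≤ a then μZ a c else 0 := by
    intro c
    by_cases h1 : c ≤ a <;> by_cases h2 : b ≤ c <;>
      simp [stmt12M, stmt12Z, h1, h2]
  simp only [h1, ← Finset.sum_filter]
  by_cases hba : b ≤ a
  · rw [hμ a b hba]
    by_cases h : a = b <;> simp [h, eq_comm]
  · have : Finset.univ.filter (fun c => b ≤ c ∧ c ≤ a) = ∅ := by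
      ext c
      simp only [Finset.mem_filter, Finset.mem_univ, true_and, Finset.notMem_empty,
        iff_false]
      rintro ⟨h1, h2⟩
      exact hba (h1.trans h2)
    rw [this]
    have : a ≠ b := fun h => hba (h ▸ le_refl a)
    simp [this]

private lemma stmt12_sexp (μZ : A → A → ℤ) (π s : A → Module.End k V)
    (hs : ∀ c : A, s c = ∑ d ∈ Finset.univ.filter (· ≤ c), μZ c d • π d) :
    ∀ c : A, s c = ∑ d : A, stmt12M μZ c d • π d := by
  intro c
  rw [hs c, Finset.sum_filter]
  refine Finset.sum_congr rfl fun d _ => ?_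
  by_cases h : d ≤ c <;> simp [stmt12M, h]

/-- Möbius inversion: `π a = ∑_{c ≤ a} s c`, in zeta-matrix form. -/
private lemma stmt12_pis (μZ : A → A → ℤ) (π s : A → Module.End k V)
    (hμ : ∀ a b : A, b ≤ a →
      (∑ c ∈ Finset.univ.filter (fun c => b ≤ c ∧ c ≤ a), μZ a c) =
        if b = a then 1 else 0)
    (hs : ∀ c : A, s c = ∑ d ∈ Finset.univ.filter (· ≤ c), μZ c d • π d) :
    ∀ a : A, π a = ∑ c : A, (stmt12Z (A := A) a c : ℤ) • s c := by
  intro a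
  have hZM : stmt12Z (A := A) * stmt12M μZ = 1 :=
    mul_eq_one_comm.mp (stmt12_MZ μZ hμ)
  have key : ∀ d : A,
      (∑ c : A, stmt12Z (A := A) a c * stmt12M μZ c d) = if a = d then 1 else 0 := by
    intro d
    have h : (stmt12Z (A := A) * stmt12M μZ) a d = (1 : Matrix A A ℤ) a d := by
      rw [hZM]
    rwa [Matrix.mul_apply, Matrix.one_apply] at h
  symm
  calc ∑ c : A, stmt12Z (A := A) a c • s c
      = ∑ c : A, ∑ d : A, (stmt12Z (A := A) a c * stmt12M μZ c d) • π d := by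
        refine Finset.sum_congr rfl fun c _ => ?_
        rw [stmt12_sexp μZ π s hs c, Finset.smul_sum]
        exact Finset.sum_congr rfl fun d _ => (mul_smul _ _ _).symm
    _ = ∑ d : A, ∑ c : A, (stmt12Z (A := A) a c * stmt12M μZ c d) • π d :=
        Finset.sum_comm
    _ = ∑ d : A, (∑ c : A, stmt12Z (A := A) a c * stmt12M μZ c d) • π d := by
        refine Finset.sum_congr rfl fun d _ => ?_
        rw [Finset.sum_smul]
    _ = ∑ d : A, (if a = d then (1 : ℤ) else 0) • π d := by
        refine Finset.sum_congr rfl fun d _ => ?_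
        rw [key d]
    _ = π a := by simp [ite_smul]

/-- Orthogonality of the `s c` from the intersection property. -/
private lemma stmt12_orth (μZ : A → A → ℤ) (π s : A → Module.End k V)
    (hμ : ∀ a b : A, b ≤ a →
      (∑ c ∈ Finset.univ.filter (fun c => b ≤ c ∧ c ≤ a), μZ a c) =
        if b = a then 1 else 0)
    (hs : ∀ c : A, s c = ∑ d ∈ Finset.univ.filter (· ≤ c), μZ c d • π d)
    (hint : ∀ a b : A,
      π a * π b = ∑ c ∈ Finset.univ.filter (fun c => c ≤ a ∧ c ≤ b), s c) :
    ∀ a b : A, s a * s b = if a = b then s a else 0 := by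
  intro a b
  have hMZ : stmt12M μZ * stmt12Z (A := A) = 1 := stmt12_MZ μZ hμ
  have key : ∀ x c : A,
      (∑ d : A, stmt12M μZ x d * stmt12Z (A := A) d c) = if x = c then 1 else 0 := by
    intro x c
    have h : (stmt12M μZ * stmt12Z (A := A)) x c = (1 : Matrix A A ℤ) x c := by
      rw [hMZ]
    rwa [Matrix.mul_apply, Matrix.one_apply] at h
  have hππ : ∀ d e : A, π d * π e =
      ∑ c : A, (stmt12Z (A := A) d c * stmt12Z (A := A) e c) • s c := by
    intro d e
    rw [hint d e, Finset.sum_filter]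
    refine Finset.sum_congr rfl fun c _ => ?_
    by_cases h1 : c ≤ d <;> by_cases h2 : c ≤ e <;> simp [stmt12Z, h1, h2]
  calc s a * s b
      = ∑ d : A, ∑ e : A, (stmt12M μZ a d * stmt12M μZ b e) • (π d * π e) := by
        rw [stmt12_sexp μZ π s hs a, stmt12_sexp μZ π s hs b, Finset.sum_mul_sum]
        exact Finset.sum_congr rfl fun d _ => Finset.sum_congr rfl fun e _ =>
          smul_mul_smul_comm _ _ _ _
    _ = ∑ d : A, ∑ e : A, ∑ c : A,
          ((stmt12M μZ a d * stmt12Z d c) * (stmt12M μZ b e * stmt12Z e c)) • s c := by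
        refine Finset.sum_congr rfl fun d _ => Finset.sum_congr rfl fun e _ => ?_
        rw [hππ d e, Finset.smul_sum]
        refine Finset.sum_congr rfl fun c _ => ?_
        rw [smul_smul]
        congr 1
        ring
    _ = ∑ c : A, ∑ d : A, ∑ e : A,
          ((stmt12M μZ a d * stmt12Z d c) * (stmt12M μZ b e * stmt12Z e c)) • s c :=
        (Finset.sum_congr rfl fun d _ => Finset.sum_comm).trans Finset.sum_comm
    _ = ∑ c : A, ((∑ d : A, stmt12M μZ a d * stmt12Z (A := A) d c) *
          (∑ e : A, stmt12M μZ b e * stmt12Z (A := A) e c)) • s c := by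
        refine Finset.sum_congr rfl fun c _ => ?_
        rw [Finset.sum_mul_sum, Finset.sum_smul]
        refine Finset.sum_congr rfl fun d _ => ?_
        rw [Finset.sum_smul]
    _ = ∑ c : A, ((if a = c then (1 : ℤ) else 0) * (if b = c then (1 : ℤ) else 0)) • s c := by
        refine Finset.sum_congr rfl fun c _ => ?_
        rw [key a c, key b c]
    _ = if a = b then s a else 0 := by
        rw [Finset.sum_eq_single a]
        · by_cases h : a = b
          · simp [h]
          · rw [if_pos rfl, if_neg (fun hba : b = a => h hba.symm), if_neg h]
            simp
        · intro c _ hca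
          simp [Ne.symm hca]
        · simp

end AuxStmt12

/-- Equivalence theorem for collections of projectors: a collection of
projectors `(π_a)` of `V` over a finite poset `A` satisfies the intersection
property (`π_a π_b = ∑_{c ≤ a, c ≤ b} s_c`, with `s` the Möbius inverse of
`π`) iff it is decomposable: there are subspaces `(S_a)_{a ∈ A⁺}` (where
`A⁺ = A` with a top element adjoined) with `V = ⊕_{a ∈ A⁺} S_a` and each
`π_a` acting on `S_b` as the identity if `b ≤ a` and as `0` otherwise
(i.e. `π_a (∑ w_b) = ∑_{b ≤ a} w_b`). -/
theorem stmt_12 {A k V : Type*} [PartialOrder A] [Fintype A] [DecidableEq A]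
    [DecidableRel ((· ≤ ·) : A → A → Prop)]
    [Field k] [AddCommGroup V] [Module k V]
    (π : A → Module.End k V)
    (hidem : ∀ a : A, π a * π a = π a)
    (μZ : A → A → ℤ)
    (hμ : ∀ a b : A, b ≤ a →
      (∑ c ∈ Finset.univ.filter (fun c => b ≤ c ∧ c ≤ a), μZ a c) =
        if b = a then 1 else 0)
    (s : A → Module.End k V)
    (hs : ∀ c : A, s c = ∑ d ∈ Finset.univ.filter (· ≤ c), μZ c d • π d) :
    (∀ a b : A,
        π a * π b = ∑ c ∈ Finset.univ.filter (fun c => c ≤ a ∧ c ≤ b), s c) ↔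
      ∃ S : WithTop A → Submodule k V,
        DirectSum.IsInternal S ∧
          ∀ (a : A) (b : WithTop A), ∀ x ∈ S b,
            π a x = if b ≤ (a : WithTop A) then x else 0 := by
  constructor
  · -- Forward direction: intersection property ⇒ decomposition.
    intro hint
    have horth := stmt12_orth μZ π s hμ hs hint
    have hπs := stmt12_pis μZ π s hμ hs
    set T : Module.End k V := ∑ c : A, s c with hT
    have hTs : ∀ b : A, T * s b = s b := by
      intro b
      rw [hT, Finset.sum_mul]
      simp [horth]
    have hsT : ∀ b : A, s b * T = s b := by
      intro b
      rw [hT, Finset.mul_sum]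
      simp [horth]
    -- the idempotents indexed by `WithTop A`
    set e : WithTop A → Module.End k V :=
      fun b => WithTop.recTopCoe (1 - T) s b with he
    have heTop : e ⊤ = 1 - T := rfl
    have heCoe : ∀ c : A, e (c : WithTop A) = s c := fun _ => rfl
    have hee0 : ∀ i j : WithTop A, i ≠ j → e i * e j = 0 := by
      intro i j hij
      induction i using WithTop.recTopCoe with
      | top =>
        induction j using WithTop.recTopCoe with
        | top => exact absurd rfl hij
        | coe b =>
          rw [heTop, heCoe, sub_mul, one_mul, hTs b, sub_self]
      | coe a =>
        induction j using WithTop.recTopCoe with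
        | top =>
          rw [heTop, heCoe, mul_sub, mul_one, hsT a, sub_self]
        | coe b =>
          have hab : a ≠ b := fun h => hij (by rw [h])
          rw [heCoe, heCoe, horth a b, if_neg hab]
    have heid : ∀ i : WithTop A, e i * e i = e i := by
      intro i
      induction i using WithTop.recTopCoe with
      | top =>
        have hTT : T * T = T := by
          rw [hT, Finset.mul_sum]
          refine Finset.sum_congr rfl fun b _ => ?_
          rw [← hT, hTs b]
        rw [heTop]
        rw [sub_mul, one_mul, mul_sub, mul_one, hTT]
        abel
      | coe a =>
        rw [heCoe, horth a a, if_pos rfl]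
    have hπe : ∀ (a : A) (i : WithTop A),
        π a * e i = if i ≤ (a : WithTop A) then e i else 0 := by
      intro a i
      induction i using WithTop.recTopCoe with
      | top =>
        have hπT : π a * T = π a := by
          rw [hπs a, Finset.sum_mul]
          refine Finset.sum_congr rfl fun c _ => ?_
          rw [smul_mul_assoc, hsT c]
        have : ¬ ((⊤ : WithTop A) ≤ (a : WithTop A)) := by
          simp
        rw [if_neg this, heTop, mul_sub, mul_one, hπT, sub_self]
      | coe c =>
        rw [heCoe]
        rw [hπs a, Finset.sum_mul]
        have h1 : ∀ d : A, (stmt12Z (A := A) a d : ℤ) • s d * s c =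
            if d = c then (stmt12Z (A := A) a d : ℤ) • s c else 0 := by
          intro d
          rw [smul_mul_assoc, horth d c]
          by_cases h : d = c <;> simp [h]
        simp only [h1]
        rw [Finset.sum_ite_eq' Finset.univ c
          (fun d => (stmt12Z (A := A) a d : ℤ) • s c)]
        simp only [Finset.mem_univ, if_true]
        have : ((c : WithTop A) ≤ (a : WithTop A)) ↔ c ≤ a := WithTop.coe_le_coe
        by_cases h : c ≤ a
        · rw [if_pos (this.mpr h)]
          simp [stmt12Z, h]
        · rw [if_neg (fun hh => h (this.mp hh))]
          simp [stmt12Z, h]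
    refine ⟨fun i => LinearMap.range (e i), ?_, ?_⟩
    · apply DirectSum.isInternal_submodule_of_iSupIndep_of_iSup_eq_top
      · -- independence
        intro i
        rw [Submodule.disjoint_def]
        intro x hxi hxrest
        have h0 : ∀ z ∈ (⨆ (j) (_ : j ≠ i), LinearMap.range (e j)), e i z = 0 := by
          intro z hz
          refine Submodule.iSup_induction
            (motive := fun z => e i z = 0) _ hz ?_ ?_ ?_
          · intro j z hz
            by_cases hji : j = i
            · have : (⨆ (_ : j ≠ i), LinearMap.range (e j)) = ⊥ := by
                simp [hji]
              rw [this] at hz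
              simp only [Submodule.mem_bot] at hz
              rw [hz, map_zero]
            · rw [iSup_pos hji] at hz
              obtain ⟨w, rfl⟩ := hz
              have := hee0 i j (Ne.symm hji)
              calc e i (e j w) = (e i * e j) w := rfl
                _ = 0 := by rw [this]; rfl
          · exact map_zero _
          · intro y z hy hz
            rw [map_add, hy, hz, add_zero]
        obtain ⟨y, rfl⟩ := hxi
        have h1 : e i (e i y) = e i y := by
          calc e i (e i y) = (e i * e i) y := rfl
            _ = e i y := by rw [heid i]
        rw [← h1, h0 _ hxrest]
      · -- iSup = ⊤
        rw [eq_top_iff]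
        intro x _
        have hx : x = e ⊤ x + ∑ c : A, s c x := by
          rw [heTop]
          simp only [LinearMap.sub_apply, Module.End.one_apply]
          rw [hT, LinearMap.sum_apply]
          abel
        rw [hx]
        refine Submodule.add_mem _ ?_ ?_
        · exact Submodule.mem_iSup_of_mem ⊤ ⟨x, rfl⟩
        · refine Submodule.sum_mem _ fun c _ => ?_
          exact Submodule.mem_iSup_of_mem (c : WithTop A) ⟨x, rfl⟩
    · -- action of π on the ranges
      intro a b x hx
      obtain ⟨y, rfl⟩ := hx
      have : π a (e b y) = (π a * e b) y := rfl
      rw [this, hπe a b]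
      by_cases h : b ≤ (a : WithTop A) <;> simp [h]
  · -- Backward direction: decomposition ⇒ intersection property.
    rintro ⟨S, hS, hact⟩ a b
    apply LinearMap.ext
    intro x
    have hx : x ∈ ⨆ i, S i := by
      rw [hS.submodule_iSup_eq_top]; trivial
    refine Submodule.iSup_induction
      (motive := fun x => (π a * π b) x =
        (∑ c ∈ Finset.univ.filter (fun c => c ≤ a ∧ c ≤ b), s c) x)
      _ hx ?_ ?_ ?_
    · intro d z hz
      induction d using WithTop.recTopCoe with
      | top =>
        have hπz : ∀ p : A, π p z = 0 := by
          intro p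
          rw [hact p ⊤ z hz, if_neg (by simp)]
        have hsz : ∀ c : A, s c z = 0 := by
          intro c
          rw [hs c, LinearMap.sum_apply]
          refine Finset.sum_eq_zero fun d _ => ?_
          rw [LinearMap.smul_apply, hπz d, smul_zero]
        rw [LinearMap.sum_apply]
        rw [Finset.sum_eq_zero fun c _ => hsz c]
        show π a (π b z) = 0
        rw [hπz b, map_zero]
      | coe d =>
        have hπz : ∀ p : A, π p z = if d ≤ p then z else 0 := by
          intro p
          rw [hact p (d : WithTop A) z hz]
          by_cases h : d ≤ p
          · rw [if_pos (WithTop.coe_le_coe.mpr h), if_pos h]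
          · rw [if_neg (fun hh => h (WithTop.coe_le_coe.mp hh)), if_neg h]
        have hsz : ∀ c : A, s c z = if c = d then z else 0 := by
          intro c
          rw [hs c, LinearMap.sum_apply]
          have h1 : ∀ e : A, (μZ c e • π e) z = if d ≤ e then μZ c e • z else 0 := by
            intro e
            rw [LinearMap.smul_apply, hπz e]
            by_cases h : d ≤ e <;> simp [h]
          rw [Finset.sum_congr rfl fun e _ => h1 e]
          rw [← Finset.sum_filter, Finset.filter_filter]
          have hfeq : Finset.univ.filter (fun e => e ≤ c ∧ d ≤ e) =
              Finset.univ.filter (fun e => d ≤ e ∧ e ≤ c) := by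
            apply Finset.filter_congr
            intro e _
            simp [and_comm]
          rw [hfeq, ← Finset.sum_smul]
          by_cases hdc : d ≤ c
          · rw [hμ c d hdc]
            by_cases h : c = d
            · rw [if_pos h, if_pos (h ▸ rfl), one_smul]
            · rw [if_neg (fun hh => h hh.symm), if_neg h, zero_smul]
          · have h0 : (∑ e ∈ Finset.univ.filter (fun e => d ≤ e ∧ e ≤ c), μZ c e) = 0 := by
              refine Finset.sum_eq_zero fun e he => ?_
              rw [Finset.mem_filter] at he
              exact absurd (he.2.1.trans he.2.2) hdc
            have hcd : c ≠ d := fun h => hdc (h ▸ le_refl c)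
            rw [h0, zero_smul, if_neg hcd]
        rw [LinearMap.sum_apply]
        rw [Finset.sum_congr rfl fun c _ => hsz c]
        rw [Finset.sum_ite_eq' _ d (fun _ => z)]
        show π a (π b z) = _
        rw [hπz b]
        simp only [Finset.mem_filter, Finset.mem_univ, true_and]
        by_cases hb : d ≤ b
        · rw [if_pos hb, hπz a]
          by_cases ha : d ≤ a
          · rw [if_pos ha, if_pos ⟨ha, hb⟩]
          · rw [if_neg ha, if_neg (fun h => ha h.1)]
        · rw [if_neg hb, map_zero, if_neg (fun h => hb h.2)]
    · simp
    · intro y z hy hz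
      rw [map_add, map_add, hy, hz]
end

section
/- Let I be a finite set, E = ∏_{i∈I}E_i with E_i finite, and ℙ a probability measure on E such that the operators π_a = E[·|ℱ_a] satisfy π_{{i}} π_{{i}^c} = π_∅ for every i ∈ I (where π_∅(f) is the constant E[f]). Then ℙ is a product measure. -/
open Finset

/-- The marginal `ℙ_a(ω) = ∑_{ω' : ω'_a = ω_a} ℙ(ω')` of a measure on a
finite product. -/
def margP {I : Type*} [Fintype I] [DecidableEq I] {E : I → Type*}
    [∀ i, Fintype (E i)] [∀ i, DecidableEq (E i)] (P : (∀ i, E i) → ℝ)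
    (a : Finset I) (ω : ∀ i, E i) : ℝ :=
  ∑ ω' ∈ Finset.univ.filter (fun ω' : ∀ i, E i => ∀ i ∈ a, ω' i = ω i), P ω'

/-- The conditional expectation `E[f | ℱ_a]` with respect to the σ-algebra
generated by the coordinates in `a`, with the convention that it vanishes on
cylinder sets of zero marginal probability. -/
noncomputable def condExpP {I : Type*} [Fintype I] [DecidableEq I]
    {E : I → Type*} [∀ i, Fintype (E i)] [∀ i, DecidableEq (E i)]
    (P : (∀ i, E i) → ℝ) (a : Finset I) (f : (∀ i, E i) → ℝ)
    (ω : ∀ i, E i) : ℝ :=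
  if margP P a ω = 0 then 0
  else (∑ ω' ∈ Finset.univ.filter (fun ω' : ∀ i, E i => ∀ i ∈ a, ω' i = ω i),
          P ω' * f ω') / margP P a ω

section Aux

variable {I : Type*} [Fintype I] [DecidableEq I] {E : I → Type*}
    [∀ i, Fintype (E i)] [∀ i, DecidableEq (E i)] (P : (∀ i, E i) → ℝ)

lemma margP_nonneg (hP0 : ∀ ω, 0 ≤ P ω) (a : Finset I) (ω : ∀ i, E i) :
    0 ≤ margP P a ω :=
  Finset.sum_nonneg fun ω' _ => hP0 ω'

lemma margP_empty (hP1 : ∑ ω, P ω = 1) (ω : ∀ i, E i) : margP P ∅ ω = 1 := by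
  simpa [margP] using hP1

lemma margP_univ (ω : ∀ i, E i) : margP P Finset.univ ω = P ω := by
  rw [margP,
    show Finset.univ.filter (fun ω' : ∀ i, E i => ∀ i ∈ Finset.univ, ω' i = ω i)
      = {ω} from by ext ω'; simp [funext_iff], Finset.sum_singleton]

lemma P_le_margP (hP0 : ∀ ω, 0 ≤ P ω) (a : Finset I) (ω : ∀ i, E i) :
    P ω ≤ margP P a ω := by
  apply Finset.single_le_sum (fun ω' _ => hP0 ω')
  simp

lemma margP_congr {a : Finset I} {ω ω' : ∀ i, E i} (hω : ∀ j ∈ a, ω' j = ω j) :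
    margP P a ω' = margP P a ω := by
  unfold margP
  congr 1
  apply Finset.filter_congr
  intro ω'' _
  constructor
  · intro hh j hj; rw [hh j hj]; exact hω j hj
  · intro hh j hj; rw [hh j hj]; exact (hω j hj).symm

lemma keyE (hP0 : ∀ ω, 0 ≤ P ω) (hP1 : ∑ ω, P ω = 1)
    (h : ∀ (i : I) (f : (∀ i, E i) → ℝ),
      condExpP P {i} (condExpP P {i}ᶜ f) = condExpP P ∅ f)
    (i : I) (ω : ∀ i, E i) :
    P ω = margP P {i} ω * margP P {i}ᶜ ω := by
  classical
  by_cases h2 : margP P {i}ᶜ ω = 0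
  · rw [h2, mul_zero]
    exact le_antisymm (h2 ▸ P_le_margP P hP0 {i}ᶜ ω) (hP0 ω)
  set f : (∀ i, E i) → ℝ :=
    fun ω' => if ∀ j ∈ ({i}ᶜ : Finset I), ω' j = ω j then 1 else 0 with hf
  have hh := congrFun (h i f) ω
  have hrhs : condExpP P ∅ f ω = margP P {i}ᶜ ω := by
    rw [condExpP, if_neg (by rw [margP_empty P hP1]; norm_num),
      margP_empty P hP1, div_one, margP,
      show (Finset.univ.filter (fun ω' : ∀ i, E i => ∀ j ∈ (∅ : Finset I), ω' j = ω j))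
        = Finset.univ from by simp, Finset.sum_filter]
    refine Finset.sum_congr rfl fun ω' _ => ?_
    simp only [hf]
    split <;> simp
  have hg : ∀ ω', ω' i = ω i → condExpP P {i}ᶜ f ω' = if ω' = ω then 1 else 0 := by
    intro ω' hi'
    by_cases he : ω' = ω
    · subst he
      rw [if_pos rfl, condExpP, if_neg h2]
      have hnum : (∑ ω'' ∈ Finset.univ.filter
          (fun ω'' : ∀ i, E i => ∀ k ∈ ({i}ᶜ : Finset I), ω'' k = ω' k), P ω'' * f ω'')
          = margP P {i}ᶜ ω' := by
        rw [margP]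
        refine Finset.sum_congr rfl fun ω'' hω'' => ?_
        simp only [Finset.mem_filter] at hω''
        simp only [hf]
        rw [if_pos hω''.2, mul_one]
      rw [hnum, div_self h2]
    · rw [if_neg he]
      obtain ⟨j, hj⟩ : ∃ j, ω' j ≠ ω j := by
        by_contra hc; push_neg at hc; exact he (funext hc)
      have hji : j ≠ i := fun hh' => hj (hh' ▸ hi')
      have hnum : (∑ ω'' ∈ Finset.univ.filter
          (fun ω'' : ∀ i, E i => ∀ k ∈ ({i}ᶜ : Finset I), ω'' k = ω' k), P ω'' * f ω'')
          = 0 := by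
        apply Finset.sum_eq_zero
        intro ω'' hω''
        simp only [Finset.mem_filter, Finset.mem_univ, true_and] at hω''
        have hz : f ω'' = 0 := by
          simp only [hf]
          rw [if_neg]
          intro hc
          exact hj (by rw [← hω'' j (by simp [hji]), hc j (by simp [hji])])
        rw [hz, mul_zero]
      rw [condExpP]
      split
      · rfl
      · rw [hnum, zero_div]
  have hω_mem : ω ∈ Finset.univ.filter
      (fun ω' : ∀ i, E i => ∀ j ∈ ({i} : Finset I), ω' j = ω j) := by simp
  have hnum : (∑ ω' ∈ Finset.univ.filter
      (fun ω' : ∀ i, E i => ∀ j ∈ ({i} : Finset I), ω' j = ω j),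
      P ω' * condExpP P {i}ᶜ f ω') = P ω := by
    rw [Finset.sum_eq_single_of_mem ω hω_mem]
    · rw [hg ω rfl, if_pos rfl, mul_one]
    · intro x hx hne
      simp only [Finset.mem_filter, Finset.mem_univ, true_and] at hx
      rw [hg x (hx i (by simp)), if_neg hne, mul_zero]
  rw [hrhs, condExpP] at hh
  split_ifs at hh with hm
  · exact absurd hh.symm h2
  · rw [hnum, div_eq_iff hm] at hh
    rw [hh]; ring

lemma sum_margP_compl (i : I) {b : Finset I} (hib : i ∈ b) (ω : ∀ i, E i) :
    ∑ ω' ∈ Finset.univ.filter (fun ω' : ∀ i, E i => ∀ j ∈ b, ω' j = ω j),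
      margP P {i}ᶜ ω' = margP P (b.erase i) ω := by
  classical
  have step : ∀ ω'' : ∀ i, E i,
      (∑ ω' ∈ Finset.univ.filter (fun ω' : ∀ i, E i => ∀ j ∈ b, ω' j = ω j),
        if ∀ j ∈ ({i}ᶜ : Finset I), ω'' j = ω' j then P ω'' else 0)
      = if ∀ j ∈ b.erase i, ω'' j = ω j then P ω'' else 0 := by
    intro ω''
    by_cases hD : ∀ j ∈ b.erase i, ω'' j = ω j
    · rw [if_pos hD]
      rw [Finset.sum_eq_single_of_mem (Function.update ω'' i (ω i)) ?mem ?other]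
      · rw [if_pos ?c]
        intro j hj
        simp only [Finset.mem_compl, Finset.mem_singleton] at hj
        rw [Function.update_of_ne hj]
      case mem =>
        simp only [Finset.mem_filter, Finset.mem_univ, true_and]
        intro j hj
        by_cases hji : j = i
        · subst hji; simp
        · rw [Function.update_of_ne hji]
          exact hD j (Finset.mem_erase.mpr ⟨hji, hj⟩)
      case other =>
        intro x hx hne
        rw [if_neg]
        intro hc
        apply hne
        simp only [Finset.mem_filter, Finset.mem_univ, true_and] at hx
        funext j
        by_cases hji : j = i
        · rw [hji, Function.update_self]; exact hx i hib
        · rw [Function.update_of_ne hji]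
          exact (hc j (by simp [hji])).symm
    · rw [if_neg hD]
      apply Finset.sum_eq_zero
      intro x hx
      rw [if_neg]
      intro hc
      apply hD
      intro j hj
      obtain ⟨hji, hjb⟩ := Finset.mem_erase.mp hj
      simp only [Finset.mem_filter, Finset.mem_univ, true_and] at hx
      rw [hc j (by simp [hji]), hx j hjb]
  calc ∑ ω' ∈ Finset.univ.filter (fun ω' : ∀ i, E i => ∀ j ∈ b, ω' j = ω j),
        margP P {i}ᶜ ω'
      = ∑ ω' ∈ Finset.univ.filter (fun ω' : ∀ i, E i => ∀ j ∈ b, ω' j = ω j),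
          ∑ ω'' : ∀ i, E i,
            if ∀ j ∈ ({i}ᶜ : Finset I), ω'' j = ω' j then P ω'' else 0 := by
        refine Finset.sum_congr rfl fun ω' _ => ?_
        rw [margP, Finset.sum_filter]
    _ = ∑ ω'' : ∀ i, E i,
          ∑ ω' ∈ Finset.univ.filter (fun ω' : ∀ i, E i => ∀ j ∈ b, ω' j = ω j),
            if ∀ j ∈ ({i}ᶜ : Finset I), ω'' j = ω' j then P ω'' else 0 :=
        Finset.sum_comm
    _ = ∑ ω'' : ∀ i, E i, if ∀ j ∈ b.erase i, ω'' j = ω j then P ω'' else 0 :=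
        Finset.sum_congr rfl fun ω'' _ => step ω''
    _ = margP P (b.erase i) ω := by rw [margP, Finset.sum_filter]

lemma margP_erase (hP0 : ∀ ω, 0 ≤ P ω) (hP1 : ∑ ω, P ω = 1)
    (h : ∀ (i : I) (f : (∀ i, E i) → ℝ),
      condExpP P {i} (condExpP P {i}ᶜ f) = condExpP P ∅ f)
    {i : I} {b : Finset I} (hib : i ∈ b) (ω : ∀ i, E i) :
    margP P b ω = margP P {i} ω * margP P (b.erase i) ω := by
  rw [margP]
  calc ∑ ω' ∈ Finset.univ.filter (fun ω' : ∀ i, E i => ∀ j ∈ b, ω' j = ω j), P ω'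
      = ∑ ω' ∈ Finset.univ.filter (fun ω' : ∀ i, E i => ∀ j ∈ b, ω' j = ω j),
          margP P {i} ω * margP P {i}ᶜ ω' := by
        refine Finset.sum_congr rfl fun ω' hω' => ?_
        simp only [Finset.mem_filter, Finset.mem_univ, true_and] at hω'
        rw [keyE P hP0 hP1 h i ω',
          margP_congr P (a := {i}) (ω := ω) (ω' := ω')
            (by intro j hj; rw [Finset.mem_singleton] at hj; rw [hj]; exact hω' i hib)]
    _ = margP P {i} ω * ∑ ω' ∈ Finset.univ.filter
          (fun ω' : ∀ i, E i => ∀ j ∈ b, ω' j = ω j), margP P {i}ᶜ ω' := by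
        rw [Finset.mul_sum]
    _ = margP P {i} ω * margP P (b.erase i) ω := by
        rw [sum_margP_compl P i hib ω]

end Aux

/-- If the conditional expectations of `ℙ` satisfy
`π_{{i}} ∘ π_{{i}ᶜ} = π_∅` for every `i ∈ I`, then `ℙ` is a product
measure. -/
theorem stmt_15 {I : Type*} [Fintype I] [DecidableEq I] {E : I → Type*}
    [∀ i, Fintype (E i)] [∀ i, DecidableEq (E i)]
    (P : (∀ i, E i) → ℝ) (hP0 : ∀ ω, 0 ≤ P ω) (hP1 : ∑ ω, P ω = 1)
    (h : ∀ (i : I) (f : (∀ i, E i) → ℝ),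
      condExpP P {i} (condExpP P {i}ᶜ f) = condExpP P ∅ f) :
    ∃ p : ∀ i, E i → ℝ,
      (∀ i x, 0 ≤ p i x) ∧ (∀ i, ∑ x, p i x = 1) ∧
        ∀ ω, P ω = ∏ i, p i (ω i) := by
  classical
  have key : ∀ b : Finset I, ∀ ω, margP P b ω = ∏ i ∈ b, margP P {i} ω := by
    intro b
    induction b using Finset.induction_on with
    | empty => intro ω; rw [margP_empty P hP1, Finset.prod_empty]
    | @insert i b hib ih =>
      intro ω
      rw [margP_erase P hP0 hP1 h (Finset.mem_insert_self i b) ω,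
        Finset.erase_insert hib, ih ω, Finset.prod_insert hib]
  refine ⟨fun i x => ∑ ω' ∈ Finset.univ.filter (fun ω' : ∀ i, E i => ω' i = x), P ω',
    ?_, ?_, ?_⟩
  · intro i x
    exact Finset.sum_nonneg fun ω' _ => hP0 ω'
  · intro i
    rw [← hP1]
    exact Finset.sum_fiberwise_of_maps_to (fun ω' _ => Finset.mem_univ _) P
  · intro ω
    have h1 := key Finset.univ ω
    rw [margP_univ P ω] at h1
    rw [h1]
    refine Finset.prod_congr rfl fun i _ => ?_
    rw [margP]
    congr 1
    apply Finset.filter_congr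
    intro ω' _
    simp
end
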